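/- The kernel of the reduced shuffle diagonal Δ̄ : T̄(V) → T̄(V)⊗T̄(V) equals the Lie subalgebra L(V) generated by V inside T̄(V) with the commutator bracket (Friedrichs' criterion for Lie elements). -/

import Mathlib

open scoped TensorProduct

/-- The shuffle diagonal on the tensor algebra: the unique algebra homomorphism
`T(V) → T(V) ⊗ T(V)` (concatenation products) sending `v ↦ v⊗1 + 1⊗v`. -/
noncomputable def shuffleDiag (k V : Type) [Field k] [AddCommGroup V] [Module k V] :
    TensorAlgebra k V →ₐ[k] TensorAlgebra k V ⊗[k] TensorAlgebra k V :=
  TensorAlgebra.lift k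
    (((Algebra.TensorProduct.includeLeft :
        TensorAlgebra k V →ₐ[k] TensorAlgebra k V ⊗[k] TensorAlgebra k V).toLinearMap
      + (Algebra.TensorProduct.includeRight :
        TensorAlgebra k V →ₐ[k] TensorAlgebra k V ⊗[k] TensorAlgebra k V).toLinearMap).comp
      (TensorAlgebra.ι k))

/-- The reduced shuffle diagonal `Δ̄(x) = Δ(x) − 1⊗x − x⊗1`. -/
noncomputable def redDiag (k V : Type) [Field k] [AddCommGroup V] [Module k V]
    (x : TensorAlgebra k V) : TensorAlgebra k V ⊗[k] TensorAlgebra k V :=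
  shuffleDiag k V x - 1 ⊗ₜ[k] x - x ⊗ₜ[k] 1

/-- The augmentation ideal `T̄(V)` of the tensor algebra, as a `k`-submodule. -/
noncomputable def augSub (k V : Type) [Field k] [AddCommGroup V] [Module k V] :
    Submodule k (TensorAlgebra k V) :=
  LinearMap.ker (TensorAlgebra.algebraMapInv : TensorAlgebra k V →ₐ[k] k).toLinearMap

/-- The subspace `T̄(V) ⊗ T̄(V)` inside `T(V) ⊗ T(V)`. -/
noncomputable def augSub2 (k V : Type) [Field k] [AddCommGroup V] [Module k V] :
    Submodule k (TensorAlgebra k V ⊗[k] TensorAlgebra k V) :=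
  LinearMap.range (TensorProduct.map (augSub k V).subtype (augSub k V).subtype)
attribute [local instance] LieRing.ofAssociativeRing
namespace Fried
variable {k V : Type} [Field k] [AddCommGroup V] [Module k V]
local notation "T" => TensorAlgebra k V
local notation "ιk" => TensorAlgebra.ι k (M := V)
noncomputable abbrev eps : T →ₐ[k] k := TensorAlgebra.algebraMapInv

@[simp] lemma eps_ι (v : V) : eps (ιk v) = 0 := by
  simp [eps, TensorAlgebra.algebraMapInv, TensorAlgebra.lift_ι_apply]

lemma shuffleDiag_ι (v : V) :
    shuffleDiag k V (ιk v) = ιk v ⊗ₜ[k] 1 + 1 ⊗ₜ[k] ιk v := by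
  simp [shuffleDiag, TensorAlgebra.lift_ι_apply]

/-- Left induction: submodule containing 1 and closed under left mult by `ι v` is everything. -/
lemma leftInduction (S : Submodule k T) (h1 : (1 : T) ∈ S)
    (hmul : ∀ (v : V) (x : T), x ∈ S → ιk v * x ∈ S) (x : T) : x ∈ S := by
  have key : ∀ x : T, ∀ y ∈ S, x * y ∈ S := by
    intro x
    induction x using TensorAlgebra.induction with
    | algebraMap r =>
      intro y hy
      rw [Algebra.algebraMap_eq_smul_one, smul_mul_assoc, one_mul]
      exact S.smul_mem r hy
    | ι v => exact fun y hy => hmul v y hy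
    | mul a b ha hb => intro y hy; rw [mul_assoc]; exact ha _ (hb _ hy)
    | add a b ha hb => intro y hy; rw [add_mul]; exact S.add_mem (ha _ hy) (hb _ hy)
  simpa using key x 1 h1



noncomputable def phiFun (v : V) : Module.End k (k × T) where
  toFun p := (0, p.1 • ιk v + (ιk v * p.2 - p.2 * ιk v))
  map_add' p q := by
    refine Prod.ext ?_ ?_
    · simp
    · simp only [Prod.fst_add, Prod.snd_add, add_smul, mul_add, add_mul]
      abel
  map_smul' c p := by
    refine Prod.ext ?_ ?_
    · simp
    · simp [smul_sub, mul_smul_comm, smul_mul_assoc, smul_add, mul_smul]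

/-- auxiliary endomorphism used to define the Dynkin bracketing map. -/
noncomputable def phi : V →ₗ[k] Module.End k (k × T) where
  toFun := phiFun
  map_add' v w := by
    refine LinearMap.ext fun p => Prod.ext ?_ ?_ <;>
      simp only [phiFun, LinearMap.coe_mk, AddHom.coe_mk, LinearMap.add_apply, map_add,
        mul_add, add_mul, smul_add, Prod.fst_add, Prod.snd_add]
    · simp
    · abel
  map_smul' c v := by
    refine LinearMap.ext fun p => Prod.ext ?_ ?_ <;>
      simp only [phiFun, LinearMap.coe_mk, AddHom.coe_mk, LinearMap.smul_apply, map_smul,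
        RingHom.id_apply, Prod.smul_fst, Prod.smul_snd, smul_sub, mul_smul_comm,
        smul_mul_assoc, smul_add]
    · simp
    · rw [smul_comm c]

noncomputable def Phi : TensorAlgebra k V →ₐ[k] Module.End k (k × T) :=
  TensorAlgebra.lift k phi

noncomputable def Fm : T →ₗ[k] k × T where
  toFun x := Phi x (1, 0)
  map_add' x y := by simp [map_add]
  map_smul' c x := by simp [map_smul]

lemma Fm_one : Fm (1 : T) = ((1 : k), (0 : T)) := by
  simp [Fm, map_one]

lemma Fm_ι_mul (v : V) (x : T) :
    Fm (ιk v * x) = (0, (Fm x).1 • ιk v + (ιk v * (Fm x).2 - (Fm x).2 * ιk v)) := by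
  show Phi (ιk v * x) (1, 0) = _
  rw [map_mul]
  have h1 : Phi (ιk v) = phiFun (k := k) v := TensorAlgebra.lift_ι_apply _ _
  show Phi (ιk v) (Phi x (1,0)) = _
  rw [h1]
  rfl

lemma Fm_fst (x : T) : (Fm x).1 = eps x := by
  have hx : x ∈ LinearMap.ker ((LinearMap.fst k k T ∘ₗ Fm) - eps.toLinearMap) := by
    refine leftInduction _ ?_ ?_ x
    · simp [Fm_one]
    · intro v y _
      simp [LinearMap.sub_apply, Fm_ι_mul, map_mul]
  simpa [sub_eq_zero] using hx

noncomputable def piD : T →ₗ[k] T := (LinearMap.snd k k T) ∘ₗ Fm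

lemma piD_one : piD (1 : T) = 0 := by simp [piD, Fm_one]

lemma piD_ι_mul (v : V) (x : T) :
    piD (ιk v * x) = (ιk v * piD x - piD x * ιk v) + eps x • ιk v := by
  simp [piD, Fm_ι_mul, Fm_fst]
  abel

noncomputable abbrev Lspan : LieSubalgebra k T :=
  LieSubalgebra.lieSpan k T (Set.range (ιk : V →ₗ[k] T))

lemma piD_mem_L (x : T) : piD x ∈ Lspan (k := k) (V := V) := by
  have hx : x ∈ Submodule.comap (piD (k := k) (V := V))
      (Lspan (k := k) (V := V)).toSubmodule := by
    refine leftInduction _ ?_ ?_ x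
    · simp [piD_one]
    · intro v y hy
      simp only [Submodule.mem_comap] at hy ⊢
      rw [piD_ι_mul]
      have hv : ιk v ∈ Lspan (k := k) (V := V) :=
        LieSubalgebra.subset_lieSpan ⟨v, rfl⟩
      have hbr : ⁅ιk v, piD y⁆ ∈ Lspan (k := k) (V := V) :=
        (Lspan (k := k) (V := V)).lie_mem hv hy
      rw [Ring.lie_def] at hbr
      exact Submodule.add_mem _ hbr (Submodule.smul_mem _ _ hv)
  simpa using hx



/-! ### Counit -/

noncomputable def Ehom : T ⊗[k] T →ₐ[k] T :=
  Algebra.TensorProduct.lift ((Algebra.ofId k T).comp eps) (AlgHom.id k T)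
    fun x y => Algebra.commutes (eps x) y

lemma Ehom_tmul (a b : T) : Ehom (a ⊗ₜ[k] b) = eps a • b := by
  exact (Algebra.TensorProduct.lift_tmul _ _ _ a b).trans
    (by simp [Algebra.ofId_apply, Algebra.smul_def])

lemma Ehom_diag (x : T) : Ehom (shuffleDiag k V x) = x := by
  have h : ((Ehom (k := k) (V := V)).comp (shuffleDiag k V)) = AlgHom.id k T := by
    apply TensorAlgebra.hom_ext
    apply LinearMap.ext; intro v
    simp [shuffleDiag_ι, Ehom_tmul]
  exact DFunLike.congr_fun h x

/-! ### The grading and number operator -/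

noncomputable abbrev pieces : ℕ → Submodule k T :=
  (LinearMap.range (ιk : V →ₗ[k] T) ^ ·)

noncomputable def Dm : T →ₗ[k] T :=
  (DirectSum.toModule k ℕ T fun n => (n : k) • (pieces (k := k) (V := V) n).subtype) ∘ₗ
    (DirectSum.decomposeLinearEquiv (pieces (k := k) (V := V))).toLinearMap

lemma Dm_of_mem {n : ℕ} {x : T} (hx : x ∈ pieces (k := k) (V := V) n) :
    Dm x = (n : k) • x := by
  have : DirectSum.decompose (pieces (k := k) (V := V)) x
      = DirectSum.of _ n (⟨x, hx⟩ : pieces (k := k) (V := V) n) :=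
    DirectSum.decompose_of_mem _ hx
  simp only [Dm, LinearMap.comp_apply, LinearEquiv.coe_toLinearMap,
    DirectSum.decomposeLinearEquiv_apply, this, ← DirectSum.lof_eq_of k,
    DirectSum.toModule_lof]
  rfl

lemma one_mem_pieces : (1 : T) ∈ pieces (k := k) (V := V) 0 :=
  SetLike.one_mem_graded _

lemma ι_mem_pieces (v : V) : ιk v ∈ pieces (k := k) (V := V) 1 := by
  simpa [pow_one] using LinearMap.mem_range_self (ιk : V →ₗ[k] T) v

lemma Dm_one : Dm (1 : T) = 0 := by
  rw [Dm_of_mem one_mem_pieces]; simp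

lemma Dm_ι_mul (v : V) (x : T) : Dm (ιk v * x) = ιk v * Dm x + ιk v * x := by
  induction x using DirectSum.Decomposition.inductionOn (pieces (k := k) (V := V)) with
  | zero => simp
  | homogeneous m =>
    obtain ⟨x, hx⟩ := m
    have h1 : ιk v * x ∈ pieces (k := k) (V := V) (1 + _) :=
      SetLike.mul_mem_graded (ι_mem_pieces v) hx
    rw [Dm_of_mem hx, Dm_of_mem h1]
    push_cast
    rw [add_smul, one_smul, mul_smul_comm]
    abel
  | add a b ha hb =>
    simp only [mul_add, map_add, ha, hb]
    abel

/-! ### The convolution identity -/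

noncomputable def Pl : T →ₗ[k] T :=
  LinearMap.mul' k T ∘ₗ
    TensorProduct.map (piD (k := k) (V := V)) LinearMap.id ∘ₗ (shuffleDiag k V).toLinearMap

noncomputable def Ql : T ⊗[k] T →ₗ[k] T :=
  LinearMap.mul' k T ∘ₗ TensorProduct.map (piD (k := k) (V := V)) LinearMap.id

lemma key_step (v : V) (z : T ⊗[k] T) :
    Ql (shuffleDiag k V (ιk v) * z) = ιk v * Ql z + ιk v * Ehom z := by
  induction z with
  | zero => simp
  | tmul a b =>
    rw [shuffleDiag_ι, add_mul, Algebra.TensorProduct.tmul_mul_tmul,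
      Algebra.TensorProduct.tmul_mul_tmul]
    simp only [one_mul, mul_one]
    simp only [Ql, LinearMap.comp_apply, map_add, TensorProduct.map_tmul,
      LinearMap.id_coe, id_eq, LinearMap.mul'_apply, Ehom_tmul, piD_ι_mul]
    rw [add_mul, sub_mul, smul_mul_assoc, mul_assoc, mul_assoc, mul_smul_comm]
    abel
  | add z w hz hw =>
    rw [mul_add, map_add, hz, map_add, hw, map_add, mul_add, mul_add]
    abel

lemma Pl_eq_Dm (x : T) : Pl x = Dm x := by
  have hx : x ∈ LinearMap.ker ((Pl (k := k) (V := V)) - (Dm (k := k) (V := V))) := by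
    refine leftInduction _ ?_ ?_ x
    · simp [Pl, Dm_one, map_one, Algebra.TensorProduct.one_def, piD_one]
    · intro v y hy
      rw [LinearMap.mem_ker, LinearMap.sub_apply, sub_eq_zero] at hy ⊢
      have : Pl (ιk v * y) = ιk v * Pl y + ιk v * y := by
        show Ql (shuffleDiag k V (ιk v * y)) = _
        rw [map_mul, key_step, Ehom_diag]
        rfl
      rw [this, hy, Dm_ι_mul]
  simpa [sub_eq_zero] using hx

lemma Pl_of_prim {x : T} (h : shuffleDiag k V x = 1 ⊗ₜ[k] x + x ⊗ₜ[k] 1) :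
    Pl x = piD x := by
  show Ql (shuffleDiag k V x) = _
  rw [h]
  simp [Ql, piD_one]

/-! ### Gradedness of the Lie span -/

open DirectSum

lemma decompose_mem_of_homog {z : T} {d : ℕ} (hz : z ∈ pieces (k := k) (V := V) d)
    (hL : z ∈ Lspan (k := k) (V := V)) (n : ℕ) :
    (DirectSum.decompose (pieces (k := k) (V := V)) z n : T) ∈ Lspan (k := k) (V := V) := by
  rcases eq_or_ne n d with rfl | hne
  · rw [DirectSum.decompose_of_mem_same _ hz]; exact hL
  · rw [DirectSum.decompose_of_mem_ne _ hz (Ne.symm hne)]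
    exact (Lspan (k := k) (V := V)).toSubmodule.zero_mem

lemma decompose_mem_Lspan {x : T} (hx : x ∈ Lspan (k := k) (V := V)) (n : ℕ) :
    (DirectSum.decompose (pieces (k := k) (V := V)) x n : T) ∈ Lspan (k := k) (V := V) := by
  classical
  let Lg : LieSubalgebra k T :=
    { carrier := {x : T | ∀ n : ℕ,
        (DirectSum.decompose (pieces (k := k) (V := V)) x n : T) ∈ Lspan (k := k) (V := V)}
      add_mem' := by
        intro a b ha hb n
        rw [DirectSum.decompose_add, DirectSum.add_apply, Submodule.coe_add]
        exact (Lspan (k := k) (V := V)).toSubmodule.add_mem (ha n) (hb n)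
      zero_mem' := by
        intro n
        rw [DirectSum.decompose_zero, DirectSum.zero_apply, ZeroMemClass.coe_zero]
        exact (Lspan (k := k) (V := V)).toSubmodule.zero_mem
      smul_mem' := by
        intro c a ha n
        rw [DirectSum.decompose_smul, DirectSum.smul_apply, SetLike.val_smul]
        exact (Lspan (k := k) (V := V)).toSubmodule.smul_mem c (ha n)
      lie_mem' := by
        intro a b ha hb n
        classical
        have key : ∀ (i j : ℕ),
            (DirectSum.decompose (pieces (k := k) (V := V))
              ((DirectSum.decompose (pieces (k := k) (V := V)) a i : T) *
                (DirectSum.decompose (pieces (k := k) (V := V)) b j : T) -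
               (DirectSum.decompose (pieces (k := k) (V := V)) b j : T) *
                (DirectSum.decompose (pieces (k := k) (V := V)) a i : T)) n : T)
              ∈ Lspan (k := k) (V := V) := by
          intro i j
          have h1 : ((DirectSum.decompose (pieces (k := k) (V := V)) a i : T) *
              (DirectSum.decompose (pieces (k := k) (V := V)) b j : T)) ∈
              pieces (k := k) (V := V) (i + j) :=
            SetLike.mul_mem_graded (SetLike.coe_mem _) (SetLike.coe_mem _)
          have h2 : ((DirectSum.decompose (pieces (k := k) (V := V)) b j : T) *
              (DirectSum.decompose (pieces (k := k) (V := V)) a i : T)) ∈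
              pieces (k := k) (V := V) (i + j) := by
            have := SetLike.mul_mem_graded
              (SetLike.coe_mem ((DirectSum.decompose (pieces (k := k) (V := V)) b) j))
              (SetLike.coe_mem ((DirectSum.decompose (pieces (k := k) (V := V)) a) i))
            rwa [add_comm j i] at this
          have h3 := (Lspan (k := k) (V := V)).lie_mem (ha i) (hb j)
          rw [Ring.lie_def] at h3
          exact decompose_mem_of_homog (d := i + j) (Submodule.sub_mem _ h1 h2) h3 n
        have expand : a * b - b * a =
            ∑ i ∈ DFinsupp.support (DirectSum.decompose (pieces (k := k) (V := V)) a),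
              ∑ j ∈ DFinsupp.support (DirectSum.decompose (pieces (k := k) (V := V)) b),
                ((DirectSum.decompose (pieces (k := k) (V := V)) a i : T) *
                  (DirectSum.decompose (pieces (k := k) (V := V)) b j : T) -
                 (DirectSum.decompose (pieces (k := k) (V := V)) b j : T) *
                  (DirectSum.decompose (pieces (k := k) (V := V)) a i : T)) := by
          conv_lhs =>
            rw [← DirectSum.sum_support_decompose (pieces (k := k) (V := V)) a,
              ← DirectSum.sum_support_decompose (pieces (k := k) (V := V)) b]
          rw [Finset.sum_mul_sum, Finset.sum_mul_sum, Finset.sum_comm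
            (s := DFinsupp.support (DirectSum.decompose (pieces (k := k) (V := V)) b))]
          rw [← Finset.sum_sub_distrib]
          simp_rw [← Finset.sum_sub_distrib]
        rw [Ring.lie_def, expand, DirectSum.decompose_sum]
        rw [DFinsupp.finset_sum_apply, AddSubmonoidClass.coe_finset_sum]
        refine Submodule.sum_mem (Lspan (k := k) (V := V)).toSubmodule fun i _ => ?_
        rw [DirectSum.decompose_sum, DFinsupp.finset_sum_apply, AddSubmonoidClass.coe_finset_sum]
        exact Submodule.sum_mem (Lspan (k := k) (V := V)).toSubmodule fun j _ => key i j
    }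
  have hle : Lspan (k := k) (V := V) ≤ Lg := by
    rw [LieSubalgebra.lieSpan_le]
    rintro y ⟨v, rfl⟩
    show ∀ m : ℕ, _
    intro m
    exact decompose_mem_of_homog (ι_mem_pieces v)
      (LieSubalgebra.subset_lieSpan ⟨v, rfl⟩) m
  exact hle hx n


/-! ### Remaining ingredients -/

lemma eps_homog {n : ℕ} (hn : n ≠ 0) {x : T} (hx : x ∈ pieces (k := k) (V := V) n) :
    eps x = 0 := by
  obtain ⟨m, rfl⟩ := Nat.exists_eq_succ_of_ne_zero hn
  have hx' : x ∈ LinearMap.range (ιk : V →ₗ[k] T) ^ (m + 1) := hx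
  rw [pow_succ] at hx'
  clear hx
  refine Submodule.mul_induction_on hx' ?_ ?_
  · rintro a _ b ⟨v, rfl⟩
    rw [map_mul]
    simp
  · intro a b ha hb
    rw [map_add, ha, hb, add_zero]

lemma decompose_Dm (x : T) (n : ℕ) :
    (DirectSum.decompose (pieces (k := k) (V := V)) (Dm x) n : T) =
      (n : k) • (DirectSum.decompose (pieces (k := k) (V := V)) x n : T) := by
  induction x using DirectSum.Decomposition.inductionOn (pieces (k := k) (V := V)) with
  | zero => simp
  | homogeneous m =>
    obtain ⟨x, hx⟩ := m
    rw [Dm_of_mem hx]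
    rcases eq_or_ne n ‹ℕ› with rfl | hne
    case inl =>
      rw [DirectSum.decompose_smul, DirectSum.smul_apply, SetLike.val_smul,
        DirectSum.decompose_of_mem_same _ hx]
    case inr =>
      rw [DirectSum.decompose_smul, DirectSum.smul_apply, SetLike.val_smul,
        DirectSum.decompose_of_mem_ne _ hx (Ne.symm hne), smul_zero, smul_zero]
  | add a b ha hb =>
    rw [map_add, DirectSum.decompose_add, DirectSum.add_apply, Submodule.coe_add, ha, hb,
      DirectSum.decompose_add, DirectSum.add_apply, Submodule.coe_add, smul_add]

/-- The primitive elements form a Lie subalgebra. -/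
noncomputable def Prim : LieSubalgebra k T where
  carrier := {x : T | eps x = 0 ∧ shuffleDiag k V x = 1 ⊗ₜ[k] x + x ⊗ₜ[k] 1}
  zero_mem' := by simp
  add_mem' := by
    rintro a b ⟨ha1, ha2⟩ ⟨hb1, hb2⟩
    refine ⟨by rw [map_add, ha1, hb1, add_zero], ?_⟩
    rw [map_add, ha2, hb2, TensorProduct.tmul_add, TensorProduct.add_tmul]
    abel
  smul_mem' := by
    rintro c a ⟨h1, h2⟩
    refine ⟨by rw [map_smul, h1, smul_zero], ?_⟩
    simp [map_smul, h2, smul_add, TensorProduct.tmul_smul, TensorProduct.smul_tmul']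
  lie_mem' := by
    rintro a b ⟨ha1, ha2⟩ ⟨hb1, hb2⟩
    rw [Ring.lie_def]
    refine ⟨by simp [map_sub, map_mul, ha1, hb1], ?_⟩
    rw [map_sub, map_mul, map_mul, ha2, hb2, TensorProduct.tmul_sub, TensorProduct.sub_tmul]
    simp only [add_mul, mul_add, Algebra.TensorProduct.tmul_mul_tmul, one_mul, mul_one]
    abel

end Fried


open Fried

/-- Friedrichs' criterion: the kernel of the reduced shuffle diagonal
`Δ̄ : T̄(V) → T̄(V)⊗T̄(V)` equals the Lie subalgebra `L(V)` generated by `V`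
inside `T̄(V)` with the commutator bracket. -/
theorem ker_redDiag_eq_lieSpan {k V : Type} [Field k] [CharZero k]
    [AddCommGroup V] [Module k V] :
    ∀ x : TensorAlgebra k V,
      (x ∈ augSub k V ∧ redDiag k V x = 0) ↔
        x ∈ LieSubalgebra.lieSpan k (TensorAlgebra k V)
          (Set.range (TensorAlgebra.ι k : V →ₗ[k] TensorAlgebra k V)) := by
  intro x
  classical
  constructor
  · rintro ⟨hxa, hxd⟩
    have hxe : eps x = 0 := hxa
    have hprim : shuffleDiag k V x = 1 ⊗ₜ[k] x + x ⊗ₜ[k] 1 := by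
      have h := hxd
      unfold redDiag at h
      rw [sub_sub, sub_eq_zero] at h
      exact h
    have hD : Dm x ∈ Lspan (k := k) (V := V) := by
      rw [← Pl_eq_Dm, Pl_of_prim hprim]
      exact piD_mem_L x
    have hcomp : ∀ n : ℕ,
        (DirectSum.decompose (pieces (k := k) (V := V)) x n : TensorAlgebra k V) ∈ Lspan (k := k) (V := V) := by
      intro n
      rcases eq_or_ne n 0 with rfl | hn
      · -- degree-zero component vanishes
        have h0 : (DirectSum.decompose (pieces (k := k) (V := V)) x 0 : TensorAlgebra k V)
            ∈ LinearMap.range (TensorAlgebra.ι k : V →ₗ[k] TensorAlgebra k V) ^ (0 : ℕ) := SetLike.coe_mem _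
        rw [pow_zero, Submodule.mem_one] at h0
        obtain ⟨c, hc⟩ := h0
        have hsum := DirectSum.sum_support_decompose (pieces (k := k) (V := V)) x
        have heps : eps x = ∑ m ∈ DFinsupp.support
            (DirectSum.decompose (pieces (k := k) (V := V)) x),
            eps (DirectSum.decompose (pieces (k := k) (V := V)) x m : TensorAlgebra k V) := by
          conv_lhs => rw [← hsum]
          rw [map_sum]
        have hc0 : (DirectSum.decompose (pieces (k := k) (V := V)) x 0 : TensorAlgebra k V) = 0 := by
          by_cases h00 : (0 : ℕ) ∈ DFinsupp.support
              (DirectSum.decompose (pieces (k := k) (V := V)) x)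
          · have : eps x = eps (DirectSum.decompose (pieces (k := k) (V := V)) x 0 : TensorAlgebra k V) := by
              rw [heps]
              refine Finset.sum_eq_single_of_mem 0 h00 fun m _ hm => ?_
              exact eps_homog hm (SetLike.coe_mem _)
            rw [hxe, ← hc] at this
            have hcz : c = 0 := by
              have := this.symm
              rwa [eps, TensorAlgebra.algebraMap_leftInverse] at this
            rw [← hc, hcz, map_zero]
          · exact DFinsupp.notMem_support_iff.mp h00 ▸ rfl
        rw [hc0]
        exact (Lspan (k := k) (V := V)).toSubmodule.zero_mem
      · have h1 := decompose_mem_Lspan hD n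
        rw [decompose_Dm] at h1
        have h2 : (DirectSum.decompose (pieces (k := k) (V := V)) x n : TensorAlgebra k V) =
            ((n : k)⁻¹) • ((n : k) • (DirectSum.decompose (pieces (k := k) (V := V)) x n : TensorAlgebra k V)) := by
          rw [smul_smul, inv_mul_cancel₀ (Nat.cast_ne_zero.mpr hn), one_smul]
        rw [h2]
        exact (Lspan (k := k) (V := V)).toSubmodule.smul_mem _ h1
    have := Submodule.sum_mem (Lspan (k := k) (V := V)).toSubmodule
      (t := DFinsupp.support (DirectSum.decompose (pieces (k := k) (V := V)) x))
      (fun n _ => hcomp n)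
    rwa [DirectSum.sum_support_decompose] at this
  · intro hx
    have hle : Lspan (k := k) (V := V) ≤ Prim := by
      rw [LieSubalgebra.lieSpan_le]
      rintro y ⟨v, rfl⟩
      exact ⟨by simp, by rw [shuffleDiag_ι]; abel⟩
    obtain ⟨h1, h2⟩ := hle hx
    refine ⟨h1, ?_⟩
    unfold redDiag
    rw [h2]
    abel
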